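/- (From Example 2.2 of the paper.) Let M = ℝ² ∖ {(1, t) : 1 ≤ t ≤ 2}, the Minkowski plane with a closed vertical segment removed. Then the Lorentzian distance d_M : M × M → [0,∞] is continuous at the point ((0,0), (0,4)). -/

import Mathlib

open Set
open scoped ENNReal

/-- A vector of the Minkowski plane (first coordinate space, second coordinate time)
is future-directed timelike. -/
def FDTimelike (v : ℝ × ℝ) : Prop := |v.1| < v.2

/-- A future-directed timelike curve in `M ⊆ ℝ²` from `p` to `q`: a piecewise `C¹`
map `γ : [0,1] → M` all of whose one-sided derivatives are future-directed timelike. -/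
def IsTimelikeCurveIn (M : Set (ℝ × ℝ)) (γ : ℝ → ℝ × ℝ) (p q : ℝ × ℝ) : Prop :=
  γ 0 = p ∧ γ 1 = q ∧ (∀ s ∈ Set.Icc (0 : ℝ) 1, γ s ∈ M) ∧
  ∃ (m : ℕ) (t : ℕ → ℝ), 0 < m ∧ t 0 = 0 ∧ t m = 1 ∧ (∀ j < m, t j < t (j + 1)) ∧
    ∀ j < m,
      ContDiffOn ℝ 1 γ (Set.Icc (t j) (t (j + 1))) ∧
      ∀ s ∈ Set.Icc (t j) (t (j + 1)),
        FDTimelike (derivWithin γ (Set.Icc (t j) (t (j + 1))) s)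

/-- The Lorentzian length of a curve in the Minkowski plane. -/
noncomputable def Llen (γ : ℝ → ℝ × ℝ) : ℝ :=
  ∫ s in (0 : ℝ)..1, Real.sqrt ((deriv γ s).2 ^ 2 - (deriv γ s).1 ^ 2)

/-- The Lorentzian distance of `M ⊆ ℝ²`. -/
noncomputable def LorDist (M : Set (ℝ × ℝ)) (p q : ℝ × ℝ) : ℝ≥0∞ :=
  ⨆ (γ : ℝ → ℝ × ℝ) (_ : IsTimelikeCurveIn M γ p q), ENNReal.ofReal (Llen γ)


/-- The Minkowski plane with the closed segment `{1} × [1,2]` removed. -/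
def Mslit : Set (ℝ × ℝ) := {p : ℝ × ℝ | ¬ (p.1 = 1 ∧ 1 ≤ p.2 ∧ p.2 ≤ 2)}

/-- Reverse Cauchy–Schwarz in the Minkowski plane. -/
lemma ptwise {v1 v2 w1 w2 : ℝ} (hv : |v1| < v2) (hw : |w1| < w2) :
    Real.sqrt (w2 ^ 2 - w1 ^ 2) * Real.sqrt (v2 ^ 2 - v1 ^ 2) ≤ w2 * v2 - w1 * v1 := by
  obtain ⟨hv1, hv2⟩ := abs_lt.1 hv
  obtain ⟨hw1, hw2⟩ := abs_lt.1 hw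
  have hv2p : 0 < v2 := (abs_nonneg v1).trans_lt hv
  have hw2p : 0 < w2 := (abs_nonneg w1).trans_lt hw
  have hprod : w1 * v1 ≤ w2 * v2 := by
    calc w1 * v1 ≤ |w1 * v1| := le_abs_self _
      _ = |w1| * |v1| := abs_mul _ _
      _ ≤ w2 * v2 := mul_le_mul hw.le hv.le (abs_nonneg v1) hw2p.le
  have h1 : Real.sqrt (w2 ^ 2 - w1 ^ 2) * Real.sqrt (v2 ^ 2 - v1 ^ 2)
      = Real.sqrt ((w2 ^ 2 - w1 ^ 2) * (v2 ^ 2 - v1 ^ 2)) :=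
    (Real.sqrt_mul (by nlinarith) _).symm
  rw [h1]
  calc Real.sqrt ((w2 ^ 2 - w1 ^ 2) * (v2 ^ 2 - v1 ^ 2))
      ≤ Real.sqrt ((w2 * v2 - w1 * v1) ^ 2) :=
        Real.sqrt_le_sqrt (by nlinarith [sq_nonneg (w2 * v1 - w1 * v2)])
    _ = w2 * v2 - w1 * v1 := Real.sqrt_sq (by linarith)

/-- Upper bound: any timelike curve from `p` to `q` has length at most the
Minkowski time separation of `p` and `q`. -/
lemma Llen_le {M : Set (ℝ × ℝ)} {p q : ℝ × ℝ} {γ : ℝ → ℝ × ℝ}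
    (h : IsTimelikeCurveIn M γ p q) (hpq : |q.1 - p.1| < q.2 - p.2) :
    Llen γ ≤ Real.sqrt ((q.2 - p.2) ^ 2 - (q.1 - p.1) ^ 2) := by
  obtain ⟨h0, h1e, -, m, t, hm, ht0, htm, hlt, hpc⟩ := h
  set w1 := q.1 - p.1 with hw1
  set w2 := q.2 - p.2 with hw2
  set c := Real.sqrt (w2 ^ 2 - w1 ^ 2) with hc
  have hw2p : 0 < w2 := (abs_nonneg w1).trans_lt hpq
  have hpos : 0 < w2 ^ 2 - w1 ^ 2 := by
    nlinarith [abs_nonneg w1, sq_abs w1, abs_lt.1 hpq]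
  have hcpos : 0 < c := Real.sqrt_pos.2 hpos
  set F : ℝ → ℝ := fun s => Real.sqrt ((deriv γ s).2 ^ 2 - (deriv γ s).1 ^ 2) with hF
  set H : ℝ → ℝ := fun s => w2 * (γ s).2 - w1 * (γ s).1 with hH
  have piece : ∀ j < m, IntervalIntegrable F MeasureTheory.volume (t j) (t (j + 1)) ∧
      c * ∫ s in (t j)..(t (j + 1)), F s ≤ H (t (j + 1)) - H (t j) := by
    intro j hj
    obtain ⟨hcd, htl⟩ := hpc j hj
    have hab : t j < t (j + 1) := hlt j hj
    set a := t j
    set b := t (j + 1)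
    set g : ℝ → ℝ × ℝ := derivWithin γ (Icc a b) with hg
    have hgc : ContinuousOn g (Icc a b) :=
      hcd.continuousOn_derivWithin (uniqueDiffOn_Icc hab) le_rfl
    set G : ℝ → ℝ := fun s => Real.sqrt ((g s).2 ^ 2 - (g s).1 ^ 2) with hG
    have hGc : ContinuousOn G (Icc a b) :=
      Real.continuous_sqrt.comp_continuousOn
        (((continuous_snd.comp_continuousOn hgc).pow 2).sub
          ((continuous_fst.comp_continuousOn hgc).pow 2))
    have hGint : IntervalIntegrable G MeasureTheory.volume a b :=
      (by rw [uIcc_of_le hab.le]; exact hGc : ContinuousOn G (uIcc a b)).intervalIntegrable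
    have hdg : ∀ s ∈ Ioo a b, deriv γ s = g s := fun s hs =>
      (derivWithin_of_mem_nhds (Icc_mem_nhds hs.1 hs.2)).symm
    have haemem : ∀ᵐ x : ℝ, x ∈ Set.uIoc a b → F x = G x := by
      have hb : ∀ᵐ x : ℝ, x ≠ b := by
        rw [MeasureTheory.ae_iff]
        have : {x : ℝ | ¬ x ≠ b} = {b} := by ext x; simp
        rw [this]
        exact Real.volume_singleton
      filter_upwards [hb] with x hxb hx
      rw [uIoc_of_le hab.le] at hx
      have hxIoo : x ∈ Ioo a b := ⟨hx.1, lt_of_le_of_ne hx.2 hxb⟩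
      simp only [hF, hG, hdg x hxIoo]
    have haer : F =ᵐ[MeasureTheory.volume.restrict (Set.uIoc a b)] G :=
      (MeasureTheory.ae_restrict_iff' measurableSet_uIoc).2 haemem
    have hFint : IntervalIntegrable F MeasureTheory.volume a b := hGint.congr_ae haer.symm
    have hFG : ∫ s in a..b, F s = ∫ s in a..b, G s :=
      intervalIntegral.integral_congr_ae haemem
    set φ : ℝ → ℝ := fun s => w2 * (g s).2 - w1 * (g s).1 with hφ
    have hφc : ContinuousOn φ (Icc a b) :=
      (continuousOn_const.mul (continuous_snd.comp_continuousOn hgc)).sub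
        (continuousOn_const.mul (continuous_fst.comp_continuousOn hgc))
    have hφint : IntervalIntegrable φ MeasureTheory.volume a b :=
      (by rw [uIcc_of_le hab.le]; exact hφc : ContinuousOn φ (uIcc a b)).intervalIntegrable
    have hptws : ∀ s ∈ Icc a b, c * G s ≤ φ s := fun s hs =>
      ptwise (htl s hs) hpq
    have hHcont : ContinuousOn H (Icc a b) :=
      (continuousOn_const.mul (continuous_snd.comp_continuousOn hcd.continuousOn)).sub
        (continuousOn_const.mul (continuous_fst.comp_continuousOn hcd.continuousOn))
    have hderiv : ∀ x ∈ Ioo a b, HasDerivWithinAt H (φ x) (Ioi x) x := by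
      intro x hx
      have hmem : Icc a b ∈ nhds x := Icc_mem_nhds hx.1 hx.2
      have hdiff : DifferentiableAt ℝ γ x :=
        ((hcd.differentiableOn one_ne_zero) x (Ioo_subset_Icc_self hx)).differentiableAt hmem
      have hda : HasDerivAt γ (g x) x := by
        rw [hg, derivWithin_of_mem_nhds hmem]
        exact hdiff.hasDerivAt
      have h2 : HasDerivAt (fun s => (γ s).2) (g x).2 x := by
        exact
          ((ContinuousLinearMap.snd ℝ ℝ ℝ).hasFDerivAt.comp_hasDerivAt x hda)
      have h1 : HasDerivAt (fun s => (γ s).1) (g x).1 x := by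
        exact
          ((ContinuousLinearMap.fst ℝ ℝ ℝ).hasFDerivAt.comp_hasDerivAt x hda)
      exact (((h2.const_mul w2).sub (h1.const_mul w1))).hasDerivWithinAt
    have hFTC : ∫ s in a..b, φ s = H b - H a :=
      intervalIntegral.integral_eq_sub_of_hasDeriv_right_of_le hab.le hHcont hderiv hφint
    refine ⟨hFint, ?_⟩
    calc c * ∫ s in a..b, F s = c * ∫ s in a..b, G s := by rw [hFG]
      _ = ∫ s in a..b, c * G s := (intervalIntegral.integral_const_mul c G).symm
      _ ≤ ∫ s in a..b, φ s :=
          intervalIntegral.integral_mono_on hab.le (hGint.const_mul c) hφint hptws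
      _ = H b - H a := hFTC
  have hsplit : ∑ j ∈ Finset.range m, ∫ s in (t j)..(t (j + 1)), F s
      = ∫ s in (0 : ℝ)..1, F s := by
    have := intervalIntegral.sum_integral_adjacent_intervals
      (μ := MeasureTheory.volume) (f := F) (a := t) (n := m) (fun k hk => (piece k hk).1)
    rwa [ht0, htm] at this
  have hLlen : Llen γ = ∫ s in (0 : ℝ)..1, F s := rfl
  have hHsum : H 1 - H 0 = w2 ^ 2 - w1 ^ 2 := by
    simp only [hH, h0, h1e]
    ring
  have hmul : c * Llen γ ≤ c ^ 2 := by
    calc c * Llen γ = ∑ j ∈ Finset.range m, c * ∫ s in (t j)..(t (j + 1)), F s := by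
          rw [hLlen, ← hsplit, Finset.mul_sum]
      _ ≤ ∑ j ∈ Finset.range m, (H (t (j + 1)) - H (t j)) :=
          Finset.sum_le_sum fun j hj => (piece j (Finset.mem_range.1 hj)).2
      _ = H (t m) - H (t 0) := Finset.sum_range_sub (fun j => H (t j)) m
      _ = w2 ^ 2 - w1 ^ 2 := by rw [ht0, htm, hHsum]
      _ = c ^ 2 := (Real.sq_sqrt hpos.le).symm
  nlinarith [hmul, hcpos]

/-- On a suitable neighborhood, the Lorentzian distance of the slit plane equals the
Minkowski time separation. -/
lemma lorDist_eq {p q : ℝ × ℝ} (hp : |p.1| < 1) (hq : |q.1| < 1)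
    (hpq : |q.1 - p.1| < q.2 - p.2) :
    LorDist Mslit p q
      = ENNReal.ofReal (Real.sqrt ((q.2 - p.2) ^ 2 - (q.1 - p.1) ^ 2)) := by
  apply le_antisymm
  · exact iSup₂_le fun γ hγ => ENNReal.ofReal_le_ofReal (Llen_le hγ hpq)
  · set σ : ℝ → ℝ × ℝ :=
      fun s => (p.1 + s * (q.1 - p.1), p.2 + s * (q.2 - p.2)) with hσ
    have hder : ∀ s : ℝ, HasDerivAt σ (q.1 - p.1, q.2 - p.2) s := by
      intro s
      have h1 : HasDerivAt (fun s : ℝ => p.1 + s * (q.1 - p.1)) (q.1 - p.1) s := by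
        simpa using ((hasDerivAt_id s).mul_const (q.1 - p.1)).const_add p.1
      have h2 : HasDerivAt (fun s : ℝ => p.2 + s * (q.2 - p.2)) (q.2 - p.2) s := by
        simpa using ((hasDerivAt_id s).mul_const (q.2 - p.2)).const_add p.2
      exact h1.prodMk h2
    have hdσ : ∀ s : ℝ, deriv σ s = (q.1 - p.1, q.2 - p.2) := fun s => (hder s).deriv
    obtain ⟨hp1, hp2⟩ := abs_lt.1 hp
    obtain ⟨hq1, hq2⟩ := abs_lt.1 hq
    have hcurve : IsTimelikeCurveIn Mslit σ p q := by
      have hσ0 : σ 0 = p := by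
        rw [hσ]; dsimp only; rw [Prod.ext_iff]; constructor <;> dsimp <;> ring
      have hσ1 : σ 1 = q := by
        rw [hσ]; dsimp only; rw [Prod.ext_iff]; constructor <;> dsimp <;> ring
      refine ⟨hσ0, hσ1, ?_, 1, fun j => (j : ℝ), one_pos, by simp, by simp,
        fun j _ => by show (j:ℝ) < ((j+1:ℕ):ℝ); exact_mod_cast Nat.lt_succ_self j, ?_⟩
      · intro s hs
        obtain ⟨hs0, hs1⟩ := hs
        rintro ⟨hx, -⟩
        have hlt1 : (σ s).1 < 1 := by
          show p.1 + s * (q.1 - p.1) < 1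
          rcases lt_or_ge s 1 with h | h
          · nlinarith [mul_pos (by linarith : (0:ℝ) < 1 - s)
              (by linarith : (0:ℝ) < 1 - p.1),
              mul_nonneg hs0 (by linarith : (0:ℝ) ≤ 1 - q.1)]
          · have hs' : s = 1 := le_antisymm hs1 h
            subst hs'
            nlinarith
        exact absurd hx (ne_of_lt hlt1)
      · intro j hj
        have hj0 : j = 0 := by omega
        subst hj0
        have hσcd : ContDiff ℝ 1 σ :=
          ((contDiff_const.add (contDiff_id.mul contDiff_const)).prodMk
            (contDiff_const.add (contDiff_id.mul contDiff_const)))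
        constructor
        · exact hσcd.contDiffOn
        · intro s hs
          simp only [show (0+1 : ℕ) = 1 from rfl, Nat.cast_one, Nat.cast_zero] at hs ⊢
          have hud : UniqueDiffWithinAt ℝ (Icc (0 : ℝ) 1) s :=
            (uniqueDiffOn_Icc one_pos) s hs
          rw [(hder s).hasDerivWithinAt.derivWithin hud]
          exact hpq
    have hlen : Llen σ = Real.sqrt ((q.2 - p.2) ^ 2 - (q.1 - p.1) ^ 2) := by
      rw [Llen]
      simp only [hdσ]
      simp
    exact le_iSup₂_of_le σ hcurve (by rw [hlen])

/-- In the slit Minkowski plane of Example 2.2, the Lorentzian distance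
`d : M × M → [0,∞]` is continuous at `((0,0),(0,4))`. -/
theorem stmt_9 :
    ContinuousWithinAt (fun pq : (ℝ × ℝ) × (ℝ × ℝ) => LorDist Mslit pq.1 pq.2)
      (Mslit ×ˢ Mslit) (((0 : ℝ), (0 : ℝ)), ((0 : ℝ), (4 : ℝ))) := by
  set x₀ : (ℝ × ℝ) × (ℝ × ℝ) := (((0 : ℝ), (0 : ℝ)), ((0 : ℝ), (4 : ℝ))) with hx₀
  set gfun : (ℝ × ℝ) × (ℝ × ℝ) → ℝ≥0∞ := fun pq =>
    ENNReal.ofReal (Real.sqrt ((pq.2.2 - pq.1.2) ^ 2 - (pq.2.1 - pq.1.1) ^ 2)) with hg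
  set U : Set ((ℝ × ℝ) × (ℝ × ℝ)) :=
    {pq | |pq.1.1| < 1 ∧ |pq.2.1| < 1 ∧ |pq.2.1 - pq.1.1| < pq.2.2 - pq.1.2} with hU
  have hUopen : IsOpen U := by
    have h1 : IsOpen {pq : (ℝ × ℝ) × (ℝ × ℝ) | |pq.1.1| < 1} :=
      isOpen_lt (by fun_prop) continuous_const
    have h2 : IsOpen {pq : (ℝ × ℝ) × (ℝ × ℝ) | |pq.2.1| < 1} :=
      isOpen_lt (by fun_prop) continuous_const
    have h3 : IsOpen {pq : (ℝ × ℝ) × (ℝ × ℝ) | |pq.2.1 - pq.1.1| < pq.2.2 - pq.1.2} :=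
      isOpen_lt (by fun_prop) (by fun_prop)
    exact h1.inter (h2.inter h3)
  have hxU : x₀ ∈ U := by
    norm_num [hU, hx₀]
  have hev : (fun pq : (ℝ × ℝ) × (ℝ × ℝ) => LorDist Mslit pq.1 pq.2) =ᶠ[nhds x₀] gfun := by
    filter_upwards [hUopen.mem_nhds hxU] with pq hpq
    exact lorDist_eq hpq.1 hpq.2.1 hpq.2.2
  have hgc : ContinuousAt gfun x₀ := by
    apply Continuous.continuousAt
    exact ENNReal.continuous_ofReal.comp (Real.continuous_sqrt.comp (by fun_prop))
  exact (hgc.congr hev.symm).continuousWithinAt
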